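/- (Stability of the nontrivial fixed point) Let d ≥ 3 and 1 ≤ γ < 2d/(d+2). With F and v* as in the Lane–Emden dynamical system, the Jacobian ∇F(v*) equals the matrix with rows (2/(2−γ) − 2, −(1/(2π))·(−dγ + 2(d−1))/(2−γ)²) and (4π, −(d − 2/(2−γ))), and both eigenvalues of ∇F(v*) have strictly negative real part; explicitly the eigenvalues are λ = 2/(2−γ) − 1 − d/2 ± (1/2)√((d−2)² − 8(−dγ + 2(d−1))/(2−γ)²). -/

import Mathlib

open Real Set

set_option maxHeartbeats 2000000 in
theorem lane_emden_fixed_point_stable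
    (d : ℕ) (hd : 3 ≤ d) (γ : ℝ) (hγ1 : 1 ≤ γ) (hγ2 : γ < 2 * d / ((d : ℝ) + 2))
    (F : ℝ × ℝ → ℝ × ℝ)
    (hF : F = fun v =>
      (-(1 / γ) * v.1 ^ (2 - γ) * v.2 + (2 / (2 - γ)) * v.1,
        4 * π * v.1 - ((d : ℝ) - 2 / (2 - γ)) * v.2))
    (vstar : ℝ × ℝ)
    (hvstar : vstar =
      (((1 / (2 * π)) * (-(d : ℝ) * γ ^ 2 + 2 * ((d : ℝ) - 1) * γ) / (2 - γ) ^ 2)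
          ^ (1 / (2 - γ)),
        (2 * γ / (2 - γ)) *
          (((1 / (2 * π)) * (-(d : ℝ) * γ ^ 2 + 2 * ((d : ℝ) - 1) * γ) / (2 - γ) ^ 2)
              ^ (1 / (2 - γ))) ^ (γ - 1)))
    (J00 J01 J10 J11 : ℝ)
    (hJ00 : J00 = 2 / (2 - γ) - 2)
    (hJ01 : J01 = -(1 / (2 * π)) * (-(d : ℝ) * γ + 2 * ((d : ℝ) - 1)) / (2 - γ) ^ 2)
    (hJ10 : J10 = 4 * π)
    (hJ11 : J11 = -((d : ℝ) - 2 / (2 - γ)))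
    (Δ : ℂ)
    (hΔ : Δ = ((((d : ℝ) - 2) ^ 2 -
        8 * (-(d : ℝ) * γ + 2 * ((d : ℝ) - 1)) / (2 - γ) ^ 2 : ℝ) : ℂ))
    (lamP lamM : ℂ)
    (hlamP : lamP = ((2 / (2 - γ) - 1 - (d : ℝ) / 2 : ℝ) : ℂ) + (1 / 2) * Δ ^ ((1 : ℂ) / 2))
    (hlamM : lamM = ((2 / (2 - γ) - 1 - (d : ℝ) / 2 : ℝ) : ℂ) - (1 / 2) * Δ ^ ((1 : ℂ) / 2)) :
    HasFDerivAt F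
      (((J00 • ContinuousLinearMap.fst ℝ ℝ ℝ + J01 • ContinuousLinearMap.snd ℝ ℝ ℝ).prod
        (J10 • ContinuousLinearMap.fst ℝ ℝ ℝ + J11 • ContinuousLinearMap.snd ℝ ℝ ℝ))) vstar ∧
    (∀ lam : ℂ, lam = lamP ∨ lam = lamM →
      ((J00 : ℂ) - lam) * ((J11 : ℂ) - lam) - (J01 : ℂ) * (J10 : ℂ) = 0 ∧ lam.re < 0) := by
  have hπ : (0:ℝ) < π := Real.pi_pos
  have hd3 : (3:ℝ) ≤ d := by exact_mod_cast hd
  have hdp : (0:ℝ) < (d:ℝ) + 2 := by linarith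
  have hγd : γ * ((d:ℝ) + 2) < 2 * d := (lt_div_iff₀ hdp).mp hγ2
  have hγ0 : (0:ℝ) < γ := by linarith
  have hγlt2 : γ < 2 := by nlinarith
  have h2γ : (0:ℝ) < 2 - γ := by linarith
  have h42 : 4 / (2 - γ) < (d:ℝ) + 2 := by
    rw [div_lt_iff₀ h2γ]; nlinarith
  have hA : (0:ℝ) < 1 / (2 * π) * (-(d:ℝ) * γ ^ 2 + 2 * ((d:ℝ) - 1) * γ) / (2 - γ) ^ 2 := by
    apply div_pos
    · apply mul_pos (by positivity)
      nlinarith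
    · positivity
  subst hF hvstar
  set A : ℝ := 1 / (2 * π) * (-(d:ℝ) * γ ^ 2 + 2 * ((d:ℝ) - 1) * γ) / (2 - γ) ^ 2 with hAdef
  set v1 : ℝ := A ^ (1 / (2 - γ)) with hv1def
  have hv1 : 0 < v1 := Real.rpow_pos_of_pos hA _
  set v2 : ℝ := 2 * γ / (2 - γ) * v1 ^ (γ - 1) with hv2def
  have e2 : v1 ^ (2 - γ) = A := by
    rw [hv1def, ← Real.rpow_mul hA.le, one_div, inv_mul_cancel₀ h2γ.ne', Real.rpow_one]
  have e1 : v1 ^ (2 - γ - 1) * v1 ^ (γ - 1) = 1 := by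
    have h : (2 - γ - 1) + (γ - 1) = 0 := by ring
    rw [← Real.rpow_add hv1, h, Real.rpow_zero]
  constructor
  · -- derivative
    have hp : HasFDerivAt (fun v : ℝ × ℝ => v.1 ^ (2 - γ))
        (((2 - γ) * (v1, v2).1 ^ (2 - γ - 1)) • ContinuousLinearMap.fst ℝ ℝ ℝ) (v1, v2) :=
      (hasFDerivAt_fst).rpow_const (Or.inl hv1.ne')
    have h1 := hp.const_mul (-(1/γ))
    have h2 := h1.mul (hasFDerivAt_snd (𝕜 := ℝ) (p := ((v1, v2) : ℝ × ℝ)))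
    have h3 := (hasFDerivAt_fst (𝕜 := ℝ) (p := ((v1, v2) : ℝ × ℝ))).const_mul (2/(2-γ))
    have hD1 := h2.add h3
    have h4 := (hasFDerivAt_fst (𝕜 := ℝ) (p := ((v1, v2) : ℝ × ℝ))).const_mul (4*π)
    have h5 := (hasFDerivAt_snd (𝕜 := ℝ) (p := ((v1, v2) : ℝ × ℝ))).const_mul ((d:ℝ) - 2/(2-γ))
    have hD2 := h4.sub h5
    have hL1 : (J00 • ContinuousLinearMap.fst ℝ ℝ ℝ + J01 • ContinuousLinearMap.snd ℝ ℝ ℝ)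
        = ((-(1/γ) * (v1, v2).1 ^ (2 - γ)) • ContinuousLinearMap.snd ℝ ℝ ℝ
            + (v1, v2).2 • ((-(1/γ)) • (((2 - γ) * (v1, v2).1 ^ (2 - γ - 1)) • ContinuousLinearMap.fst ℝ ℝ ℝ))
            + (2/(2-γ)) • ContinuousLinearMap.fst ℝ ℝ ℝ) := by
      apply ContinuousLinearMap.ext
      intro p
      simp only [ContinuousLinearMap.add_apply, ContinuousLinearMap.coe_smul',
        Pi.smul_apply, ContinuousLinearMap.coe_fst', ContinuousLinearMap.coe_snd',
        smul_eq_mul]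
      have e3 : v2 * ((2 - γ) * v1 ^ (2 - γ - 1)) = 2 * γ := by
        rw [hv2def, show 2 * γ / (2 - γ) * v1 ^ (γ - 1) * ((2 - γ) * v1 ^ (2 - γ - 1))
            = 2 * γ * (v1 ^ (2 - γ - 1) * v1 ^ (γ - 1)) * ((2 - γ) / (2 - γ)) by ring,
          e1, div_self h2γ.ne']
        ring
      have e4 : -(1/γ) * A = J01 := by
        rw [hJ01, hAdef]
        field_simp
      rw [hJ00, e2, ← e4]
      linear_combination (p.1/γ) * e3 + (2*p.1) * (inv_mul_cancel₀ (ne_of_gt hγ0))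
    have hL2 : (J10 • ContinuousLinearMap.fst ℝ ℝ ℝ + J11 • ContinuousLinearMap.snd ℝ ℝ ℝ)
        = ((4*π) • ContinuousLinearMap.fst ℝ ℝ ℝ - ((d:ℝ) - 2/(2-γ)) • ContinuousLinearMap.snd ℝ ℝ ℝ) := by
      apply ContinuousLinearMap.ext
      intro p
      simp [hJ10, hJ11]
      ring
    rw [hL1, hL2]
    exact hD1.prodMk hD2
  · -- eigenvalues
    set t : ℝ := 2 / (2 - γ) - 1 - (d:ℝ) / 2 with htdef
    set Dr : ℝ := ((d:ℝ) - 2) ^ 2 - 8 * (-(d:ℝ) * γ + 2 * ((d:ℝ) - 1)) / (2 - γ) ^ 2 with hDrdef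
    set s : ℂ := Δ ^ ((1 : ℂ) / 2) with hsdef
    have hs2 : s * s = ((Dr : ℝ) : ℂ) := by
      by_cases h0 : ((Dr : ℝ) : ℂ) = 0
      · rw [hsdef, hΔ, h0, Complex.zero_cpow (by norm_num : (1:ℂ)/2 ≠ 0), mul_zero]
      · rw [hsdef, hΔ, ← Complex.cpow_add _ _ h0]
        norm_num
    have hrim : s.re * s.im = 0 := by
      have h := congrArg Complex.im hs2
      simp [Complex.mul_im] at h
      linarith
    have hrre : s.re * s.re - s.im * s.im = Dr := by
      have h := congrArg Complex.re hs2
      simpa [Complex.mul_re] using h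
    have ht : t < 0 := by
      have h : 2 / (2 - γ) = (4 / (2 - γ)) / 2 := by ring
      rw [htdef, h]; linarith
    have hdet : 0 < t ^ 2 - Dr / 4 := by
      have hkey : t ^ 2 - Dr / 4 = 2 * (d:ℝ) - 4 / (2 - γ) := by
        rw [htdef, hDrdef]; field_simp; ring
      rw [hkey]; linarith
    have r1 : J00 + J11 = 2 * t := by rw [hJ00, hJ11, htdef]; ring
    have r2 : J00 * J11 - J01 * J10 = t ^ 2 - Dr / 4 := by
      rw [hJ00, hJ01, hJ10, hJ11, htdef, hDrdef]; field_simp; ring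
    have c1 : (J00 : ℂ) + (J11 : ℂ) = 2 * ((t : ℝ) : ℂ) := by
      have := congrArg (fun x : ℝ => (x : ℂ)) r1
      push_cast at this; exact_mod_cast r1
    have c2 : (J00 : ℂ) * (J11 : ℂ) - (J01 : ℂ) * (J10 : ℂ)
        = ((t : ℝ) : ℂ) ^ 2 - ((Dr : ℝ) : ℂ) / 4 := by
      have := congrArg (fun x : ℝ => (x : ℂ)) r2
      push_cast at this; exact_mod_cast r2
    have hquad : ∀ z : ℂ, ((J00 : ℂ) - z) * ((J11 : ℂ) - z) - (J01 : ℂ) * (J10 : ℂ)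
        = (z - ((t : ℝ) : ℂ)) ^ 2 - ((Dr : ℝ) : ℂ) / 4 := by
      intro z
      linear_combination c2 - z * c1
    have h12 : ((1 : ℂ) / 2) = (((1:ℝ)/2 : ℝ) : ℂ) := by norm_num
    have hreP : lamP.re = t + s.re / 2 := by
      rw [hlamP, h12]
      simp [Complex.add_re, Complex.mul_re, Complex.ofReal_re, Complex.ofReal_im]
      ring
    have hreM : lamM.re = t - s.re / 2 := by
      rw [hlamM, h12]
      simp [Complex.sub_re, Complex.mul_re, Complex.ofReal_re, Complex.ofReal_im]
      ring
    have hbound : s.im = 0 → s.re * s.re < 4 * t ^ 2 := by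
      intro h
      rw [h] at hrre
      have h' : s.re * s.re = Dr := by linarith
      rw [h']
      clear_value t Dr
      linarith
    intro lam hlam
    rcases hlam with rfl | rfl
    · refine ⟨?_, ?_⟩
      · rw [hquad, hlamP]
        linear_combination hs2 / 4
      · rw [hreP]
        rcases mul_eq_zero.mp hrim with h | h
        · rw [h]; linarith
        · have := hbound h
          nlinarith
    · refine ⟨?_, ?_⟩
      · rw [hquad, hlamM]
        linear_combination hs2 / 4
      · rw [hreM]
        rcases mul_eq_zero.mp hrim with h | h
        · rw [h]; linarith
        · have := hbound h
          nlinarith
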